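/- For fixed X_std, X_ext, and Σ, there exists a scalar γ > 0 depending only on X_std, X_ext, Σ such that for every true parameter θ⋆ ∈ ℝ^d and every c > 0: if L_std(θ̂_aug) − L_std(θ̂_std) > c, then ‖θ⋆‖₂² − ‖θ̂_std‖₂² > γ c. That is, a large increase in standard error upon augmentation forces the true parameter to be sufficiently more complex (in ℓ2 norm) than the standard estimator. -/

import Mathlib

open Matrix BigOperators

/-- Standard (population) error of `θ` w.r.t. covariance `S` and true parameter `θstar`:
`(θ − θ⋆)ᵀ Σ (θ − θ⋆)`. -/
def Lstd {d : ℕ} (S : Matrix (Fin d) (Fin d) ℝ) (θstar θ : Fin d → ℝ) : ℝ :=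
  (θ - θstar) ⬝ᵥ S.mulVec (θ - θstar)

/-- `θ` is the minimum Euclidean-norm solution of the constraint `C`. -/
def IsMinNormInterp {d : ℕ} (C : (Fin d → ℝ) → Prop) (θ : Fin d → ℝ) : Prop :=
  C θ ∧ ∀ θ', C θ' → θ ⬝ᵥ θ ≤ θ' ⬝ᵥ θ'

/-- `P` is the orthogonal projection matrix onto `Null(X)`:
symmetric, idempotent, range contained in `Null(X)`, and fixing `Null(X)`. -/
def IsOrthProjNull {n d : ℕ} (X : Matrix (Fin n) (Fin d) ℝ)
    (P : Matrix (Fin d) (Fin d) ℝ) : Prop :=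
  Pᵀ = P ∧ P * P = P ∧ (∀ v, X.mulVec (P.mulVec v) = 0) ∧
    (∀ v, X.mulVec v = 0 → P.mulVec v = v)

/-- `P` is the orthogonal projection matrix onto `Null(X1) ∩ Null(X2)`. -/
def IsOrthProjNull2 {n m d : ℕ} (X1 : Matrix (Fin n) (Fin d) ℝ)
    (X2 : Matrix (Fin m) (Fin d) ℝ) (P : Matrix (Fin d) (Fin d) ℝ) : Prop :=
  Pᵀ = P ∧ P * P = P ∧ (∀ v, X1.mulVec (P.mulVec v) = 0 ∧ X2.mulVec (P.mulVec v) = 0) ∧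
    (∀ v, X1.mulVec v = 0 → X2.mulVec v = 0 → P.mulVec v = v)


/-- Pythagoras for min-norm solutions of affine constraints. -/
lemma minnorm_pythagoras {d : ℕ} (C : (Fin d → ℝ) → Prop) (θ θs : Fin d → ℝ)
    (hC : ∀ t : ℝ, C (θ + t • (θs - θ)))
    (hmin : ∀ θ', C θ' → θ ⬝ᵥ θ ≤ θ' ⬝ᵥ θ') :
    θ ⬝ᵥ θ + (θs - θ) ⬝ᵥ (θs - θ) ≤ θs ⬝ᵥ θs := by
  set v : Fin d → ℝ := θs - θ with hv
  have hb : 0 ≤ v ⬝ᵥ v := by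
    simp only [dotProduct]
    exact Finset.sum_nonneg fun i _ => mul_self_nonneg _
  set a : ℝ := θ ⬝ᵥ v with ha
  set b : ℝ := v ⬝ᵥ v with hbdef
  have hexp : ∀ t : ℝ, (θ + t • v) ⬝ᵥ (θ + t • v) = θ ⬝ᵥ θ + 2 * t * a + t * t * b := by
    intro t
    simp only [add_dotProduct, dotProduct_add, smul_dotProduct, dotProduct_smul,
      dotProduct_comm v θ, smul_eq_mul, ← ha, ← hbdef]
    ring
  have key : ∀ t : ℝ, 0 ≤ 2 * t * a + t * t * b := by
    intro t
    have := hmin _ (hC t)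
    rw [hexp t] at this
    linarith
  have ha0 : a = 0 := by
    have hb1 : 0 < b + 1 := by linarith
    have h1 := key (-a / (b + 1))
    have hne : b + 1 ≠ 0 := ne_of_gt hb1
    field_simp at h1
    rw [zero_mul] at h1
    nlinarith [sq_nonneg a, mul_pos hb1 hb1]
  have hθs : θs = θ + v := by rw [hv]; abel
  have h2 := hexp 1
  rw [one_smul] at h2
  rw [hθs, h2, ha0]
  linarith

/-- Elementary bound on the quadratic form by the squared Euclidean norm. -/
lemma quad_bound {d : ℕ} (S : Matrix (Fin d) (Fin d) ℝ) (v : Fin d → ℝ) :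
    v ⬝ᵥ S.mulVec v ≤ (∑ i, ∑ j, |S i j|) * (v ⬝ᵥ v) := by
  have hvv : ∀ k, v k * v k ≤ v ⬝ᵥ v := by
    intro k
    simp only [dotProduct]
    exact Finset.single_le_sum (f := fun k => v k * v k)
      (fun i _ => mul_self_nonneg _) (Finset.mem_univ k)
  have hterm : ∀ i j, v i * (S i j * v j) ≤ |S i j| * (v ⬝ᵥ v) := by
    intro i j
    have h1 : v i * (S i j * v j) ≤ |S i j| * (|v i| * |v j|) := by
      calc v i * (S i j * v j) ≤ |v i * (S i j * v j)| := le_abs_self _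
        _ = |S i j| * (|v i| * |v j|) := by rw [abs_mul, abs_mul]; ring
    have h2 : |v i| * |v j| ≤ v ⬝ᵥ v := by
      nlinarith [hvv i, hvv j, abs_nonneg (v i), abs_nonneg (v j), sq_abs (v i), sq_abs (v j),
        sq_nonneg (|v i| - |v j|)]
    calc v i * (S i j * v j) ≤ |S i j| * (|v i| * |v j|) := h1
      _ ≤ |S i j| * (v ⬝ᵥ v) := mul_le_mul_of_nonneg_left h2 (abs_nonneg _)
  calc v ⬝ᵥ S.mulVec v = ∑ i, ∑ j, v i * (S i j * v j) := by
        simp only [dotProduct, Matrix.mulVec, Finset.mul_sum]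
    _ ≤ ∑ i, ∑ j, |S i j| * (v ⬝ᵥ v) :=
        Finset.sum_le_sum fun i _ => Finset.sum_le_sum fun j _ => hterm i j
    _ = (∑ i, ∑ j, |S i j|) * (v ⬝ᵥ v) := by rw [Finset.sum_mul]; simp [Finset.sum_mul]

/-- Proposition 3 (paper): for fixed data matrices and covariance there is a constant
`γ > 0` such that whenever augmentation increases the standard error by more than `c`,
the true parameter is more complex than the standard estimator by more than `γ c`
in squared Euclidean norm. -/
theorem complexity_lower_bound {n m d : ℕ}
    (Xstd : Matrix (Fin n) (Fin d) ℝ) (Xext : Matrix (Fin m) (Fin d) ℝ)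
    (S : Matrix (Fin d) (Fin d) ℝ) (hS : S.PosSemidef) :
    ∃ γ : ℝ, 0 < γ ∧
      ∀ (θstar θstd θaug : Fin d → ℝ) (c : ℝ), 0 < c →
        IsMinNormInterp (fun θ => Xstd.mulVec θ = Xstd.mulVec θstar) θstd →
        IsMinNormInterp
          (fun θ => Xstd.mulVec θ = Xstd.mulVec θstar ∧ Xext.mulVec θ = Xext.mulVec θstar)
          θaug →
        Lstd S θstar θaug - Lstd S θstar θstd > c →
        θstar ⬝ᵥ θstar - θstd ⬝ᵥ θstd > γ * c := by
  set K : ℝ := (∑ i, ∑ j, |S i j|) + 1 with hK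
  have hKpos : 0 < K := by
    have : (0:ℝ) ≤ ∑ i, ∑ j, |S i j| :=
      Finset.sum_nonneg fun i _ => Finset.sum_nonneg fun j _ => abs_nonneg _
    linarith
  refine ⟨1 / K, by positivity, ?_⟩
  intro θstar θstd θaug c hc hstd haug hgap
  simp only [IsMinNormInterp, Lstd] at hstd haug hgap
  -- θaug satisfies the std constraint, so θstd has smaller norm
  have h1 : θstd ⬝ᵥ θstd ≤ θaug ⬝ᵥ θaug := hstd.2 θaug haug.1.1
  -- Pythagoras for θaug w.r.t. augmented constraint
  have hpy : θaug ⬝ᵥ θaug + (θstar - θaug) ⬝ᵥ (θstar - θaug) ≤ θstar ⬝ᵥ θstar := by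
    apply minnorm_pythagoras
      (fun θ => Xstd.mulVec θ = Xstd.mulVec θstar ∧ Xext.mulVec θ = Xext.mulVec θstar)
    · intro t
      constructor <;>
      · rw [Matrix.mulVec_add, Matrix.mulVec_smul, Matrix.mulVec_sub]
        simp [haug.1.1, haug.1.2]
    · exact haug.2
  -- Lstd nonnegativity for θstd
  have h0 : 0 ≤ (θstd - θstar) ⬝ᵥ S.mulVec (θstd - θstar) := by
    have := hS.dotProduct_mulVec_nonneg (θstd - θstar); simpa using this
  -- quadratic bound
  have hq : (θaug - θstar) ⬝ᵥ S.mulVec (θaug - θstar) ≤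
      (∑ i, ∑ j, |S i j|) * ((θaug - θstar) ⬝ᵥ (θaug - θstar)) := quad_bound S _
  have hsq : (θaug - θstar) ⬝ᵥ (θaug - θstar) = (θstar - θaug) ⬝ᵥ (θstar - θaug) := by
    have : θaug - θstar = -(θstar - θaug) := by abel
    rw [this, neg_dotProduct, dotProduct_neg, neg_neg]
  have hnn : 0 ≤ (θstar - θaug) ⬝ᵥ (θstar - θaug) := by
    simp only [dotProduct]
    exact Finset.sum_nonneg fun i _ => mul_self_nonneg _
  -- chain
  have hchain : c < K * (θstar ⬝ᵥ θstar - θstd ⬝ᵥ θstd) := by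
    have e1 : c < (θaug - θstar) ⬝ᵥ S.mulVec (θaug - θstar) := by linarith
    have e2 : (θaug - θstar) ⬝ᵥ S.mulVec (θaug - θstar) ≤
        K * ((θstar - θaug) ⬝ᵥ (θstar - θaug)) := by
      rw [hsq] at hq
      nlinarith [hnn]
    have e3 : (θstar - θaug) ⬝ᵥ (θstar - θaug) ≤ θstar ⬝ᵥ θstar - θstd ⬝ᵥ θstd := by linarith
    calc c < (θaug - θstar) ⬝ᵥ S.mulVec (θaug - θstar) := e1
      _ ≤ K * ((θstar - θaug) ⬝ᵥ (θstar - θaug)) := e2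
      _ ≤ K * (θstar ⬝ᵥ θstar - θstd ⬝ᵥ θstd) := by
          exact mul_le_mul_of_nonneg_left e3 (le_of_lt hKpos)
  rw [gt_iff_lt, div_mul_eq_mul_div, one_mul, div_lt_iff₀ hKpos]
  linarith [hchain]
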